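/- Let A ∈ ℝ^{n×n} and B ∈ ℝ^{n×m}, and suppose the controllability matrix 𝒞 = [B | -AB | A²B | ⋯ | (-A)^{n-1}B] ∈ ℝ^{n×nm} has rank strictly less than n. Then there exists a nonzero vector α ∈ ℝ^n such that for every continuous control u : [T₀, T₁] → ℝ^m, one has αᵀ ∫_{T₀}^{T₁} exp(-(s - T₀)A) B u(s) ds = 0; in particular the reachable set of the controlled quadratic gradient flow is contained in a proper affine subspace of ℝ^n, so the system is not controllable. -/

import Mathlib

open scoped Matrix

/-- The controllability (Pontryagin–Kalman) matrix
`𝒞 = [B | -AB | A²B | ⋯ | (-A)^{n-1}B]`, indexed so that the block of column index `(i, j)`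
is the `j`-th column of `(-A)^i B`. -/
def ctrlMatrix {n m : ℕ} (A : Matrix (Fin n) (Fin n) ℝ) (B : Matrix (Fin n) (Fin m) ℝ) :
    Matrix (Fin n) (Fin n × Fin m) ℝ :=
  Matrix.of fun i p => ((-A) ^ (p.1 : ℕ) * B) i p.2

/-- A matrix with rank less than its number of rows has a nonzero left null vector. -/
theorem exists_vecMul_eq_zero_of_rank_lt {n : ℕ} {ι : Type*} [Fintype ι]
    (M : Matrix (Fin n) ι ℝ) (h : M.rank < n) :
    ∃ α : Fin n → ℝ, α ≠ 0 ∧ Matrix.vecMul α M = 0 := by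
  have h2 : Mᵀ.rank < n := by rwa [Matrix.rank_transpose]
  have hker : LinearMap.ker Mᵀ.mulVecLin ≠ ⊥ := by
    intro hk
    have h3 := LinearMap.finrank_range_add_finrank_ker Mᵀ.mulVecLin
    rw [hk, finrank_bot] at h3
    simp only [Matrix.rank] at h2
    rw [Module.finrank_fin_fun] at h3
    omega
  obtain ⟨α, hα1, hα2⟩ := Submodule.exists_mem_ne_zero_of_ne_bot hker
  rw [LinearMap.mem_ker, Matrix.mulVecLin_apply, Matrix.mulVec_transpose] at hα1
  exact ⟨α, hα2, hα1⟩

theorem vecMul_matrix_smul' {n m : ℕ} (α : Fin n → ℝ) (c : ℝ) (X : Matrix (Fin n) (Fin m) ℝ) :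
    Matrix.vecMul α (c • X) = c • Matrix.vecMul α X := by
  ext j
  simp [Matrix.vecMul, dotProduct, Finset.mul_sum, mul_left_comm]

theorem vecMul_finset_sum' {n m : ℕ} (α : Fin n → ℝ) (s : Finset ℕ)
    (f : ℕ → Matrix (Fin n) (Fin m) ℝ) :
    Matrix.vecMul α (∑ i ∈ s, f i) = ∑ i ∈ s, Matrix.vecMul α (f i) := by
  induction s using Finset.cons_induction with
  | empty => simp
  | cons a s ha ih => simp [Finset.sum_insert ha, Matrix.vecMul_add, ih]

/-- Cayley–Hamilton: if `α` kills `(-A)^i B` for all `i < n`, it kills all powers. -/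
theorem vecMul_pow_mul_eq_zero {n m : ℕ} (hn : 0 < n)
    (A : Matrix (Fin n) (Fin n) ℝ) (B : Matrix (Fin n) (Fin m) ℝ)
    (α : Fin n → ℝ) (hα : ∀ i : Fin n, Matrix.vecMul α ((-A) ^ (i : ℕ) * B) = 0) (k : ℕ) :
    Matrix.vecMul α ((-A) ^ k * B) = 0 := by
  set M := -A with hM
  have hpow := Matrix.pow_eq_aeval_mod_charpoly M k
  have hdeg : ((Polynomial.X ^ k) %ₘ M.charpoly).natDegree < n := by
    by_cases hz : (Polynomial.X ^ k) %ₘ M.charpoly = 0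
    · simpa [hz] using hn
    have h1 := Polynomial.degree_modByMonic_lt (Polynomial.X ^ k) M.charpoly_monic
    rw [M.charpoly_degree_eq_dim, Fintype.card_fin] at h1
    exact (Polynomial.natDegree_lt_iff_degree_lt hz).2 h1
  rw [hpow, Polynomial.aeval_eq_sum_range' hdeg, Matrix.sum_mul, vecMul_finset_sum']
  refine Finset.sum_eq_zero fun i hi => ?_
  rw [Finset.mem_range] at hi
  rw [Matrix.smul_mul, vecMul_matrix_smul', hα ⟨i, hi⟩, smul_zero]

/-- If `α` kills all powers `(-A)^k B`, it kills `exp(t • (-A)) B`. -/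
theorem vecMul_exp_mul_eq_zero {n m : ℕ}
    (A : Matrix (Fin n) (Fin n) ℝ) (B : Matrix (Fin n) (Fin m) ℝ)
    (α : Fin n → ℝ) (hα : ∀ k : ℕ, Matrix.vecMul α ((-A) ^ k * B) = 0) (t : ℝ) :
    Matrix.vecMul α (NormedSpace.exp (t • (-A)) * B) = 0 := by
  letI : SeminormedRing (Matrix (Fin n) (Fin n) ℝ) := Matrix.linftyOpSemiNormedRing
  letI : NormedRing (Matrix (Fin n) (Fin n) ℝ) := Matrix.linftyOpNormedRing
  letI : NormedAlgebra ℝ (Matrix (Fin n) (Fin n) ℝ) := Matrix.linftyOpNormedAlgebra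
  set M := -A with hM
  let L : Matrix (Fin n) (Fin n) ℝ →ₗ[ℝ] (Fin m → ℝ) :=
    { toFun := fun X => Matrix.vecMul α (X * B)
      map_add' := fun X Y => by rw [Matrix.add_mul, Matrix.vecMul_add]
      map_smul' := fun c X => by
        simp only [RingHom.id_apply]
        rw [Matrix.smul_mul, vecMul_matrix_smul'] }
  let L' : Matrix (Fin n) (Fin n) ℝ →L[ℝ] (Fin m → ℝ) :=
    { L with cont := L.continuous_of_finiteDimensional }
  have hL' : ∀ X, L' X = Matrix.vecMul α (X * B) := fun _ => rfl
  have hsum : Summable fun k : ℕ => ((k.factorial : ℝ)⁻¹) • (t • M) ^ k :=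
    NormedSpace.expSeries_summable' (𝕂 := ℝ) (t • M)
  have hext : NormedSpace.exp (t • M) = ∑' k : ℕ, ((k.factorial : ℝ)⁻¹) • (t • M) ^ k := by
    rw [NormedSpace.exp_eq_tsum (𝕂 := ℝ)]
  calc Matrix.vecMul α (NormedSpace.exp (t • M) * B)
      = L' (∑' k : ℕ, ((k.factorial : ℝ)⁻¹) • (t • M) ^ k) := by rw [← hext, hL']
    _ = ∑' k : ℕ, L' (((k.factorial : ℝ)⁻¹) • (t • M) ^ k) := L'.map_tsum hsum
    _ = ∑' _ : ℕ, (0 : Fin m → ℝ) := by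
        congr 1; funext k
        rw [map_smul, hL', smul_pow, Matrix.smul_mul, vecMul_matrix_smul', hα k]
        simp
    _ = 0 := tsum_zero

/-- If the controllability matrix has rank `< n`, then there is a nonzero `α ∈ ℝⁿ`
orthogonal to `∫_{T₀}^{T₁} exp(-(s - T₀)A) B u(s) ds` for every continuous control `u`:
the system is not controllable. -/
theorem not_controllable_of_rank_ctrlMatrix_lt
    {n m : ℕ} (A : Matrix (Fin n) (Fin n) ℝ) (B : Matrix (Fin n) (Fin m) ℝ)
    (T₀ T₁ : ℝ) (hT : T₀ < T₁)
    (hrank : (ctrlMatrix A B).rank < n) :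
    ∃ α : Fin n → ℝ, α ≠ 0 ∧
      ∀ u : ℝ → Fin m → ℝ, Continuous u →
        α ⬝ᵥ (∫ s in T₀..T₁, (NormedSpace.exp (-((s - T₀) • A))).mulVec (B.mulVec (u s))) = 0 := by
  have hn : 0 < n := lt_of_le_of_lt (Nat.zero_le _) hrank
  obtain ⟨α, hα0, hαC⟩ := exists_vecMul_eq_zero_of_rank_lt (ctrlMatrix A B) hrank
  have hαi : ∀ i : Fin n, Matrix.vecMul α ((-A) ^ (i : ℕ) * B) = 0 := by
    intro i
    funext j
    have := congrFun hαC (i, j)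
    simpa [ctrlMatrix, Matrix.vecMul, dotProduct] using this
  have hαk := vecMul_pow_mul_eq_zero hn A B α hαi
  have hexp : ∀ t : ℝ, Matrix.vecMul α (NormedSpace.exp (t • (-A)) * B) = 0 :=
    vecMul_exp_mul_eq_zero A B α hαk
  refine ⟨α, hα0, fun u hu => ?_⟩
  -- rewrite the exponent
  have hneg : ∀ s : ℝ, -((s - T₀) • A) = (s - T₀) • (-A) := fun s => by
    rw [smul_neg]
  -- the integrand composed with dot product with α vanishes pointwise
  have hpt : ∀ s : ℝ,
      α ⬝ᵥ ((NormedSpace.exp (-((s - T₀) • A))).mulVec (B.mulVec (u s))) = 0 := by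
    intro s
    rw [hneg s, Matrix.dotProduct_mulVec, Matrix.dotProduct_mulVec, Matrix.vecMul_vecMul,
      hexp (s - T₀)]
    simp
  -- continuity and integrability of the integrand
  letI : SeminormedRing (Matrix (Fin n) (Fin n) ℝ) := Matrix.linftyOpSemiNormedRing
  letI : NormedRing (Matrix (Fin n) (Fin n) ℝ) := Matrix.linftyOpNormedRing
  letI : NormedAlgebra ℝ (Matrix (Fin n) (Fin n) ℝ) := Matrix.linftyOpNormedAlgebra
  have hcont : Continuous fun s : ℝ =>
      (NormedSpace.exp (-((s - T₀) • A))).mulVec (B.mulVec (u s)) := by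
    apply Continuous.matrix_mulVec
    · exact (continuous_iff_continuousAt.2 fun x =>
        (NormedSpace.exp_analytic (𝕂 := ℝ) x).continuousAt).comp (by continuity)
    · exact (continuous_const (y := B)).matrix_mulVec hu
  have hint : IntervalIntegrable
      (fun s : ℝ => (NormedSpace.exp (-((s - T₀) • A))).mulVec (B.mulVec (u s)))
      MeasureTheory.volume T₀ T₁ := hcont.intervalIntegrable _ _
  -- move the dot product inside the integral
  let Lα : (Fin n → ℝ) →ₗ[ℝ] ℝ :=
    { toFun := fun v => α ⬝ᵥ v
      map_add' := fun v w => dotProduct_add α v w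
      map_smul' := fun c v => by simp [dotProduct_smul] }
  let Lα' : (Fin n → ℝ) →L[ℝ] ℝ := { Lα with cont := Lα.continuous_of_finiteDimensional }
  have hLα : ∀ v, Lα' v = α ⬝ᵥ v := fun _ => rfl
  rw [← hLα, ← Lα'.intervalIntegral_comp_comm hint]
  simp only [hLα, hpt]
  simp
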